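/- Let L, K be positive integers and let S ⊂ ℤ^d satisfy |S ∩ (Q_{4LK} + x)| ≤ K for all x ∈ ℤ^d, where Q_R = {x ∈ ℤ^d : ‖x‖₁ ≤ R}. Then for any finite set Λ ⊂ ℤ^d there exists an extension Λ̃ with Λ ⊂ Λ̃ ⊂ {x : dist₁(x, Λ) ≤ 2KL}, and such that for every x ∈ S with (Q_L + x) ∩ Λ̃ ≠ ∅ one has (Q_L + x) ⊂ Λ̃. -/

import Mathlib

namespace SaturationAux

variable {d : ℕ}

def d1 (x y : Fin d → ℤ) : ℕ := ∑ i, (x i - y i).natAbs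

lemma d1_comm (x y : Fin d → ℤ) : d1 x y = d1 y x :=
  Finset.sum_congr rfl fun i _ => by omega

lemma d1_self (x : Fin d → ℤ) : d1 x x = 0 := by simp [d1]

lemma d1_tri (x y z : Fin d → ℤ) : d1 x z ≤ d1 x y + d1 y z := by
  rw [d1, d1, d1, ← Finset.sum_add_distrib]
  exact Finset.sum_le_sum fun i _ => by omega

lemma ball_finite (x : Fin d → ℤ) (R : ℕ) : {y : Fin d → ℤ | d1 y x ≤ R}.Finite := by
  apply (Set.finite_Icc (fun i => x i - R) (fun i => x i + R)).subset
  intro y hy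
  simp only [Set.mem_setOf_eq, d1] at hy
  have key : ∀ i, (y i - x i).natAbs ≤ R := fun i =>
    le_trans (Finset.single_le_sum (f := fun i => (y i - x i).natAbs)
      (fun _ _ => Nat.zero_le _) (Finset.mem_univ i)) hy
  constructor
  · intro i
    show x i - (R : ℤ) ≤ y i
    have h2 : (y i - x i).natAbs ≤ R := key i
    omega
  · intro i
    show y i ≤ x i + (R : ℤ)
    have h2 : (y i - x i).natAbs ≤ R := key i
    omega

def Good (L : ℕ) (S Λ : Set (Fin d → ℤ)) (l : List (Fin d → ℤ)) : Prop :=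
  l ≠ [] ∧ (∀ a ∈ l, a ∈ S) ∧ l.Nodup ∧ l.Chain' (fun a b => d1 a b ≤ 2 * L) ∧
    ∀ x ∈ l.getLast?, ∃ z ∈ Λ, d1 z x ≤ L

lemma Good.suffix {L : ℕ} {S Λ : Set (Fin d → ℤ)} {l₁ l₂ : List (Fin d → ℤ)}
    (h : Good L S Λ l₂) (hs : l₁ <:+ l₂) (hne : l₁ ≠ []) : Good L S Λ l₁ := by
  obtain ⟨hne2, hmem, hnd, hch, hlast⟩ := h
  refine ⟨hne, fun a ha => hmem a (hs.sublist.subset ha), hs.sublist.nodup hnd,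
    hch.suffix hs, ?_⟩
  obtain ⟨t, rfl⟩ := hs
  rwa [List.getLast?_append_of_ne_nil t hne] at hlast

lemma chain_dist {L : ℕ} (x : Fin d → ℤ) (l : List (Fin d → ℤ))
    (hch : (x :: l).Chain' (fun a b => d1 a b ≤ 2 * L)) :
    ∀ a ∈ x :: l, ∀ b ∈ (x :: l).getLast?, d1 a b ≤ 2 * L * l.length := by
  induction l generalizing x with
  | nil =>
    intro a ha b hb
    simp only [List.mem_singleton] at ha
    simp only [List.getLast?_singleton, Option.mem_some_iff] at hb
    subst ha; subst hb; simp [d1_self]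
  | cons y l' ih =>
    intro a ha b hb
    rw [List.getLast?_cons_cons] at hb
    have hxy : d1 x y ≤ 2 * L := (List.isChain_cons_cons.mp hch).1
    have hch' := (List.isChain_cons_cons.mp hch).2
    rcases List.mem_cons.mp ha with rfl | ha'
    · have h1 := ih y hch' y List.mem_cons_self b hb
      calc d1 a b ≤ d1 a y + d1 y b := d1_tri _ _ _
        _ ≤ 2 * L + 2 * L * l'.length := add_le_add hxy h1
        _ = 2 * L * (y :: l').length := by simp [List.length_cons]; ring
    · have h1 := ih y hch' a ha' b hb
      calc d1 a b ≤ 2 * L * l'.length := h1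
        _ ≤ 2 * L * (y :: l').length := by
            exact Nat.mul_le_mul_left _ (by simp)

lemma length_le {L K : ℕ} {S Λ : Set (Fin d → ℤ)}
    (hS : ∀ x, (S ∩ {y | d1 y x ≤ 4 * L * K}).ncard ≤ K)
    {l : List (Fin d → ℤ)} (h : Good L S Λ l) : l.length ≤ K := by
  by_contra hlen
  push_neg at hlen
  set m := l.length - (K + 1) with hm
  have hd : l.drop m <:+ l := List.drop_suffix m l
  have hlen' : (l.drop m).length = K + 1 := by rw [List.length_drop]; omega
  have hne : l.drop m ≠ [] := by
    intro h0; rw [h0] at hlen'; simp at hlen'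
  have h' := h.suffix hd hne
  obtain ⟨x0, t, ht⟩ : ∃ x0 t, l.drop m = x0 :: t := by
    cases h0 : l.drop m with
    | nil => exact absurd h0 hne
    | cons a s => exact ⟨a, s, rfl⟩
  obtain ⟨b, hb⟩ : ∃ b, (l.drop m).getLast? = some b :=
    ⟨_, List.getLast?_eq_getLast hne⟩
  have hsub : (↑(l.drop m).toFinset : Set (Fin d → ℤ)) ⊆ S ∩ {y | d1 y b ≤ 4 * L * K} := by
    intro a ha
    rw [Finset.mem_coe, List.mem_toFinset] at ha
    refine ⟨h'.2.1 a ha, ?_⟩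
    have hcd := chain_dist x0 t (ht ▸ h'.2.2.2.1) a (ht ▸ ha) b (by rw [← ht]; exact hb)
    have htl : t.length = K := by
      have := hlen'; rw [ht] at this; simpa using this
    simp only [Set.mem_setOf_eq]
    calc d1 a b ≤ 2 * L * t.length := hcd
      _ = 2 * L * K := by rw [htl]
      _ ≤ 4 * L * K := by nlinarith
  have hcard : (l.drop m).toFinset.card = K + 1 := by
    rw [List.toFinset_card_of_nodup h'.2.2.1]; exact hlen'
  have hfin : (S ∩ {y | d1 y b ≤ 4 * L * K}).Finite :=
    (ball_finite b (4 * L * K)).subset Set.inter_subset_right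
  have hle := Set.ncard_le_ncard hsub hfin
  rw [Set.ncard_coe_finset, hcard] at hle
  have := hS b
  omega

end SaturationAux

open SaturationAux in
/-- Saturation lemma: let `L, K` be positive integers and `S ⊂ ℤ^d` satisfy
`|S ∩ (Q_{4LK} + x)| ≤ K` for all `x`, where `Q_R` is the ℓ¹-ball of radius `R`.
Then any finite `Λ ⊂ ℤ^d` admits an extension `Λ̃` with
`Λ ⊆ Λ̃ ⊆ {x : dist₁(x,Λ) ≤ 2KL}` such that every translate `Q_L + x` (`x ∈ S`)
meeting `Λ̃` is contained in `Λ̃`. -/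
theorem saturation_lemma (d L K : ℕ) (hL : 0 < L) (hK : 0 < K)
    (S : Set (Fin d → ℤ))
    (hS : ∀ x : Fin d → ℤ,
      (S ∩ {y | ∑ i, (y i - x i).natAbs ≤ 4 * L * K}).ncard ≤ K)
    (Λ : Set (Fin d → ℤ)) (hΛ : Λ.Finite) :
    ∃ Λt : Set (Fin d → ℤ),
      Λ ⊆ Λt ∧
      Λt ⊆ {x | ∃ y ∈ Λ, ∑ i, (x i - y i).natAbs ≤ 2 * K * L} ∧
      ∀ x ∈ S, ({y | ∑ i, (y i - x i).natAbs ≤ L} ∩ Λt).Nonempty →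
        {y | ∑ i, (y i - x i).natAbs ≤ L} ⊆ Λt := by
  have hS' : ∀ x : Fin d → ℤ, (S ∩ {y | d1 y x ≤ 4 * L * K}).ncard ≤ K := hS
  refine ⟨Λ ∪ {p | ∃ x l, Good L S Λ (x :: l) ∧ d1 p x ≤ L}, Set.subset_union_left, ?_, ?_⟩
  · rintro p (hp | ⟨x, l, hg, hpx⟩)
    · exact ⟨p, hp, by simp [show ∀ i : Fin d, (p i - p i).natAbs = 0 from fun i => by omega]⟩
    · obtain ⟨b, hb⟩ : ∃ b, (x :: l).getLast? = some b :=
        ⟨_, List.getLast?_eq_getLast (by simp)⟩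
      obtain ⟨z, hzΛ, hzb⟩ := hg.2.2.2.2 b hb
      have hxb : d1 x b ≤ 2 * L * l.length :=
        chain_dist x l hg.2.2.2.1 x List.mem_cons_self b hb
      have hlen : l.length + 1 ≤ K := by
        have := length_le hS' hg; simpa using this
      refine ⟨z, hzΛ, ?_⟩
      have h1 : d1 p z ≤ d1 p x + d1 x b + d1 b z :=
        le_trans (d1_tri p x z) (by have := d1_tri x b z; omega)
      have h2 : d1 b z = d1 z b := d1_comm b z
      show d1 p z ≤ 2 * K * L
      have : d1 p z ≤ L + 2 * L * l.length + L := by omega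
      calc d1 p z ≤ 2 * L * (l.length + 1) := by rw [Nat.mul_add]; omega
        _ ≤ 2 * L * K := Nat.mul_le_mul_left _ hlen
        _ = 2 * K * L := by ring
  · rintro x hxS ⟨p, hp1, hp2⟩
    have hpx : d1 p x ≤ L := hp1
    have key : ∃ l, Good L S Λ (x :: l) := by
      rcases hp2 with hpΛ | ⟨x', l', hg', hpx'⟩
      · exact ⟨[], by simp, fun a ha => (List.mem_singleton.mp ha) ▸ hxS,
          List.nodup_singleton x, List.isChain_singleton x,
          fun b hb => ⟨p, hpΛ, by rw [List.getLast?_singleton, Option.mem_some_iff] at hb; exact hb ▸ hpx⟩⟩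
      · have hxx' : d1 x x' ≤ 2 * L := by
          have h1 := d1_tri x p x'
          have h2 : d1 x p = d1 p x := d1_comm x p
          omega
        by_cases hmem : x ∈ x' :: l'
        · obtain ⟨s, t, hst⟩ := List.mem_iff_append.mp hmem
          have hsuf : (x :: t) <:+ (x' :: l') := ⟨s, hst.symm⟩
          exact ⟨t, hg'.suffix hsuf (by simp)⟩
        · refine ⟨x' :: l', by simp, ?_, ?_, ?_, ?_⟩
          · intro a ha
            rcases List.mem_cons.mp ha with rfl | ha'
            · exact hxS
            · exact hg'.2.1 a ha'
          · exact List.nodup_cons.mpr ⟨hmem, hg'.2.2.1⟩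
          · exact List.isChain_cons_cons.mpr ⟨hxx', hg'.2.2.2.1⟩
          · intro b hb
            rw [List.getLast?_cons_cons] at hb
            exact hg'.2.2.2.2 b hb
    obtain ⟨l, hgl⟩ := key
    intro q hq
    exact Or.inr ⟨x, l, hgl, hq⟩
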